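/- arXiv:1901.05797 — 4 statements merged into one kernel-verified Lean document; each statement's English description precedes it below -/
import Mathlib

section
/- Let Z ∈ {0,1}^{n×m} and k ∈ ℕ. Then Z = X^T∘Y for some unimodal binary matrices X ∈ {0,1}^{k×n} and Y ∈ {0,1}^{k×m} if and only if there exist permutations σ of {1,…,n} and τ of {1,…,m} and intervals I_1,…,I_k ⊆ {1,…,n} and J_1,…,J_k ⊆ {1,…,m} such that the permuted matrix Z′ defined by z′_{ij} = z_{σ(i)τ(j)} satisfies: z′_{ij} = 1 exactly when (i,j) ∈ ⋃_{ℓ=1}^k I_ℓ × J_ℓ. That is, Z has such a factorization exactly when its rows and columns can be permuted so that its 1s form a union of k contiguous (axis-aligned) rectangular tiles. -/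
/-- The Boolean matrix product `X^T ∘ Y` of `X ∈ {0,1}^{k×n}` and `Y ∈ {0,1}^{k×m}`:
`(X^T ∘ Y)_{ij} = ⋁_ℓ x_{ℓi} ∧ y_{ℓj}`. -/
def boolProdT {k n m : ℕ} (X : Matrix (Fin k) (Fin n) Bool) (Y : Matrix (Fin k) (Fin m) Bool) :
    Matrix (Fin n) (Fin m) Bool :=
  Matrix.of fun i j => decide (∃ ℓ : Fin k, X ℓ i = true ∧ Y ℓ j = true)

/-- A binary matrix is unimodal (has the consecutive ones property) if its columns can be
permuted so that in every row the 1s occupy consecutive positions. -/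
def IsUnimodal {k n : ℕ} (X : Matrix (Fin k) (Fin n) Bool) : Prop :=
  ∃ σ : Equiv.Perm (Fin n), ∀ ℓ : Fin k, ∃ a b : ℕ,
    ∀ i : Fin n, X ℓ (σ i) = true ↔ (a ≤ (i : ℕ) ∧ (i : ℕ) ≤ b)

/-- A set of indices is an interval if it consists of consecutive positions
`{a, a+1, …, b}` (possibly empty). -/
def IsIntervalSet {n : ℕ} (I : Set (Fin n)) : Prop :=
  ∃ a b : ℕ, ∀ i : Fin n, i ∈ I ↔ (a ≤ (i : ℕ) ∧ (i : ℕ) ≤ b)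

/-- `Z = X^T ∘ Y` for some unimodal binary matrices `X ∈ {0,1}^{k×n}`,
`Y ∈ {0,1}^{k×m}` iff the rows and columns of `Z` can be permuted so that its 1s form a
union of `k` contiguous axis-aligned rectangular tiles `I_ℓ × J_ℓ`. -/
theorem obmf_factorization_iff_tiles {n m k : ℕ} (Z : Matrix (Fin n) (Fin m) Bool) :
    (∃ (X : Matrix (Fin k) (Fin n) Bool) (Y : Matrix (Fin k) (Fin m) Bool),
        IsUnimodal X ∧ IsUnimodal Y ∧ Z = boolProdT X Y) ↔
      (∃ (σ : Equiv.Perm (Fin n)) (τ : Equiv.Perm (Fin m))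
          (I : Fin k → Set (Fin n)) (J : Fin k → Set (Fin m)),
        (∀ ℓ, IsIntervalSet (I ℓ)) ∧ (∀ ℓ, IsIntervalSet (J ℓ)) ∧
        ∀ (i : Fin n) (j : Fin m),
          Z (σ i) (τ j) = true ↔ ∃ ℓ : Fin k, i ∈ I ℓ ∧ j ∈ J ℓ) := by
  constructor
  · rintro ⟨X, Y, ⟨σ, hX⟩, ⟨τ, hY⟩, rfl⟩
    refine ⟨σ, τ, fun ℓ => {i | X ℓ (σ i) = true}, fun ℓ => {j | Y ℓ (τ j) = true},
      fun ℓ => ?_, fun ℓ => ?_, fun i j => ?_⟩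
    · obtain ⟨a, b, h⟩ := hX ℓ; exact ⟨a, b, h⟩
    · obtain ⟨a, b, h⟩ := hY ℓ; exact ⟨a, b, h⟩
    · simp [boolProdT, Set.mem_setOf_eq]
  · rintro ⟨σ, τ, I, J, hI, hJ, h⟩
    refine ⟨Matrix.of fun ℓ i => @decide (σ.symm i ∈ I ℓ) (Classical.propDecidable _),
            Matrix.of fun ℓ j => @decide (τ.symm j ∈ J ℓ) (Classical.propDecidable _), ⟨σ, fun ℓ => ?_⟩,
            ⟨τ, fun ℓ => ?_⟩, ?_⟩
    · obtain ⟨a, b, hab⟩ := hI ℓ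
      exact ⟨a, b, fun i => by simp [hab]⟩
    · obtain ⟨a, b, hab⟩ := hJ ℓ
      exact ⟨a, b, fun j => by simp [hab]⟩
    · ext i j
      have := h (σ.symm i) (τ.symm j)
      simp only [Equiv.apply_symm_apply] at this
      rw [show Z i j = decide (Z i j = true) by cases Z i j <;> simp]
      congr 1
      rw [this]
      refine propext ⟨fun ⟨ℓ, h1, h2⟩ => ⟨ℓ, by simpa using h1, by simpa using h2⟩,
        fun ⟨ℓ, h1, h2⟩ => ⟨ℓ, by simpa using h1, by simpa using h2⟩⟩
end

section
/- Let Z ∈ {0,1}^{n×m} and k ∈ ℕ. Then Z = X^T∘Y for some cyclic binary matrices X ∈ {0,1}^{k×n} and Y ∈ {0,1}^{k×m} if and only if there exist permutations σ of {1,…,n} and τ of {1,…,m} and cyclic intervals I_1,…,I_k of {1,…,n} and J_1,…,J_k of {1,…,m} such that the permuted matrix Z′ defined by z′_{ij} = z_{σ(i)τ(j)} satisfies: z′_{ij} = 1 exactly when (i,j) ∈ ⋃_{ℓ=1}^k I_ℓ × J_ℓ. That is, Z has such a factorization exactly when its rows and columns can be permuted so that its 1s form a union of k contiguous rectangular tiles,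 where the tiles are additionally allowed to wrap around the borders of the matrix. -/
/-- A set of indices is a cyclic interval if it consists of positions that are consecutive
modulo `n`, i.e. it is an interval or the complement of an interval. -/
def IsCyclicIntervalSet {n : ℕ} (I : Set (Fin n)) : Prop :=
  IsIntervalSet I ∨ IsIntervalSet Iᶜ

/-- A binary matrix is cyclic if its columns can be permuted so that in every row the 1s
have the form `[0,…,0,1,…,1,0,…,0]` or `[1,…,1,0,…,0,1,…,1]`, i.e. the 1s of every row
occupy a set of positions consecutive modulo the number of columns. -/
def IsCyclicMat {k n : ℕ} (X : Matrix (Fin k) (Fin n) Bool) : Prop :=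
  ∃ σ : Equiv.Perm (Fin n), ∀ ℓ : Fin k,
    IsCyclicIntervalSet {i : Fin n | X ℓ (σ i) = true}

/-- `Z = X^T ∘ Y` for some cyclic binary matrices `X ∈ {0,1}^{k×n}`,
`Y ∈ {0,1}^{k×m}` iff the rows and columns of `Z` can be permuted so that its 1s form a
union of `k` contiguous rectangular tiles `I_ℓ × J_ℓ` that may wrap around the borders. -/
theorem cobmf_factorization_iff_cyclic_tiles {n m k : ℕ} (Z : Matrix (Fin n) (Fin m) Bool) :
    (∃ (X : Matrix (Fin k) (Fin n) Bool) (Y : Matrix (Fin k) (Fin m) Bool),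
        IsCyclicMat X ∧ IsCyclicMat Y ∧ Z = boolProdT X Y) ↔
      (∃ (σ : Equiv.Perm (Fin n)) (τ : Equiv.Perm (Fin m))
          (I : Fin k → Set (Fin n)) (J : Fin k → Set (Fin m)),
        (∀ ℓ, IsCyclicIntervalSet (I ℓ)) ∧ (∀ ℓ, IsCyclicIntervalSet (J ℓ)) ∧
        ∀ (i : Fin n) (j : Fin m),
          Z (σ i) (τ j) = true ↔ ∃ ℓ : Fin k, i ∈ I ℓ ∧ j ∈ J ℓ) := by

  constructor
  · rintro ⟨X, Y, ⟨σ, hX⟩, ⟨τ, hY⟩, rfl⟩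
    refine ⟨σ, τ, fun ℓ => {i | X ℓ (σ i) = true}, fun ℓ => {j | Y ℓ (τ j) = true},
      hX, hY, fun i j => ?_⟩
    simp [boolProdT, Set.mem_setOf_eq]
  · rintro ⟨σ, τ, I, J, hI, hJ, h⟩
    classical
    refine ⟨Matrix.of fun ℓ i => decide ((σ.symm i) ∈ I ℓ),
      Matrix.of fun ℓ j => decide ((τ.symm j) ∈ J ℓ), ⟨σ, fun ℓ => ?_⟩, ⟨τ, fun ℓ => ?_⟩, ?_⟩
    · simpa using hI ℓ
    · simpa using hJ ℓ
    · ext i j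
      have := h (σ.symm i) (τ.symm j)
      simp only [Equiv.apply_symm_apply] at this
      simp [boolProdT, this]
      rw [Bool.eq_iff_iff, this, decide_eq_true_eq]
end

section
/- Let G = (V, E) be a graph with n vertices and m edges, and let D_G be the binary matrix of size (n+m+1)×(3m+1) constructed from G as described. If G has a Hamiltonian path, then there exist unimodal binary matrices X of size k×(n+m+1) and Y of size k×(3m+1) with k = 3m − n + 2 such that D_G = X^T∘Y. Concretely, ordering the columns as z_0, x_1, y_1, z_1, x_2, y_2, z_2, …, and ordering the rows of R according to the Hamiltonian path followed by the rows of S, the 1s of the permuted matrix form a union of k contiguous rectangular tiles: m+1 tiles covering the individual rows of S, n−1 tiles covering the edges along the Hamiltonian path, and 2(m−n+1) tiles covering the remaining edges (2 tiles per edge). -/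
/-- Row index `r_v` (for a vertex `v = v_1, …, v_n`, 0-indexed) of the matrix `D_G`. -/
def rIdx {n m : ℕ} (v : Fin n) : Fin (n + m + 1) := ⟨v.1, by have := v.2; omega⟩

/-- Row index `s_t` (for `t = 0, …, m`) of the matrix `D_G`. -/
def sIdx {n m : ℕ} (t : Fin (m + 1)) : Fin (n + m + 1) := ⟨n + t.1, by have := t.2; omega⟩

/-- Column index `x_{k+1}` (for the edge `e_{k+1}`, 0-indexed `k`) of the matrix `D_G`. -/
def xIdx {m : ℕ} (k : Fin m) : Fin (3 * m + 1) := ⟨k.1, by have := k.2; omega⟩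

/-- Column index `y_{k+1}` (for the edge `e_{k+1}`, 0-indexed `k`) of the matrix `D_G`. -/
def yIdx {m : ℕ} (k : Fin m) : Fin (3 * m + 1) := ⟨m + k.1, by have := k.2; omega⟩

/-- Column index `z_t` (for `t = 0, …, m`) of the matrix `D_G`. -/
def zIdx {m : ℕ} (t : Fin (m + 1)) : Fin (3 * m + 1) := ⟨2 * m + t.1, by have := t.2; omega⟩

/-- The binary matrix `D_G` of size `(n+m+1) × (3m+1)` built from a graph on `n` vertices
whose `m` edges are enumerated by `e : Fin m → Sym2 (Fin n)`.  Its 1s are exactly: for each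
edge `e_ℓ = {v_i, v_j}` the cells `(r_i, x_ℓ)`, `(r_j, x_ℓ)`, `(r_i, y_ℓ)`, `(r_j, y_ℓ)`;
for each `ℓ = 1, …, m−1` the cells `(s_ℓ, y_ℓ)`, `(s_ℓ, z_ℓ)`, `(s_ℓ, x_{ℓ+1})`;
and the cells `(s_0, x_1)`, `(s_0, z_0)`, `(s_m, y_m)`, `(s_m, z_m)`. -/
def DG (n m : ℕ) (e : Fin m → Sym2 (Fin n)) : Matrix (Fin (n + m + 1)) (Fin (3 * m + 1)) Bool :=
  Matrix.of fun i j => decide (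
    (∃ (v : Fin n) (k : Fin m), i = rIdx v ∧ (j = xIdx k ∨ j = yIdx k) ∧ v ∈ e k) ∨
    (∃ t : Fin (m + 1), i = sIdx t ∧
      (j = zIdx t ∨
       (∃ k : Fin m, j = yIdx k ∧ (t : ℕ) = (k : ℕ) + 1) ∨
       (∃ k : Fin m, j = xIdx k ∧ (t : ℕ) = (k : ℕ)))))

/-- `G` (with vertices `Fin n` and edges enumerated by `e`) has a Hamiltonian path:
an ordering of all vertices in which consecutive vertices are joined by an edge. -/
def HasHamiltonianPath {n m : ℕ} (e : Fin m → Sym2 (Fin n)) : Prop :=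
  ∃ p : Fin n → Fin n, Function.Bijective p ∧
    ∀ i j : Fin n, (j : ℕ) = (i : ℕ) + 1 → s(p i, p j) ∈ Set.range e


namespace DGAux

/-- position of column `c` in the order `z₀ x₀ y₀ z₁ x₁ y₁ z₂ …`. -/
def poscAux (m c : ℕ) : ℕ :=
  if c < m then 3 * c + 1 else if c < 2 * m then 3 * (c - m) + 2 else 3 * (c - 2 * m)

lemma poscAux_x {m : ℕ} (k : Fin m) : poscAux m (xIdx k).1 = 3 * k.1 + 1 := by
  have := k.2; show poscAux m k.1 = _; unfold poscAux; split_ifs <;> omega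

lemma poscAux_y {m : ℕ} (k : Fin m) : poscAux m (yIdx k).1 = 3 * k.1 + 2 := by
  have := k.2; show poscAux m (m + k.1) = _; unfold poscAux; split_ifs <;> omega

lemma poscAux_z {m : ℕ} (t : Fin (m + 1)) : poscAux m (zIdx t).1 = 3 * t.1 := by
  have := t.2; show poscAux m (2 * m + t.1) = _; unfold poscAux; split_ifs <;> omega

lemma poscAux_cases (m c : ℕ) :
    (c < m ∧ poscAux m c = 3 * c + 1) ∨
    (m ≤ c ∧ c < 2 * m ∧ poscAux m c = 3 * (c - m) + 2) ∨
    (2 * m ≤ c ∧ poscAux m c = 3 * (c - 2 * m)) := by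
  unfold poscAux; split_ifs <;> omega

/-- the column at position `j`. -/
def colAt {m : ℕ} (j : Fin (3 * m + 1)) : Fin (3 * m + 1) :=
  ⟨if j.1 % 3 = 1 then j.1 / 3 else if j.1 % 3 = 2 then m + j.1 / 3 else 2 * m + j.1 / 3,
   by have := j.2; split_ifs <;> omega⟩

lemma poscAux_colAt {m : ℕ} (j : Fin (3 * m + 1)) : poscAux m (colAt j).1 = j.1 := by
  have := j.2; simp only [colAt, poscAux]; split_ifs <;> omega

lemma colAt_injective {m : ℕ} : Function.Injective (colAt (m := m)) := by
  intro a b h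
  have : poscAux m (colAt a).1 = poscAux m (colAt b).1 := by rw [h]
  rw [poscAux_colAt, poscAux_colAt] at this
  exact Fin.ext this

variable {n m : ℕ}

/-- position of row `i` in the order `p₀ … p_{n-1} s₀ … s_m` where `qq = p⁻¹`. -/
def posr (qq : Fin n → Fin n) (i : Fin (n + m + 1)) : ℕ :=
  if h : i.1 < n then (qq ⟨i.1, h⟩).1 else i.1

/-- the row at position `j`. -/
def rowAt (pp : Fin n → Fin n) (j : Fin (n + m + 1)) : Fin (n + m + 1) :=
  if h : j.1 < n then rIdx (pp ⟨j.1, h⟩) else j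

lemma posr_rIdx (qq : Fin n → Fin n) (v : Fin n) :
    posr (m := m) qq (rIdx v) = (qq v).1 := by
  rw [posr, dif_pos (show (rIdx (m := m) v).1 < n from v.2)]; rfl

lemma posr_sIdx (qq : Fin n → Fin n) (t : Fin (m + 1)) :
    posr qq (sIdx t) = n + t.1 := by
  rw [posr, dif_neg (show ¬ (sIdx (n := n) t).1 < n by simp [sIdx])]; rfl

lemma posr_rowAt (pp qq : Fin n → Fin n) (hqp : ∀ v, qq (pp v) = v)
    (j : Fin (n + m + 1)) : posr qq (rowAt pp j) = j.1 := by
  by_cases h : j.1 < n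
  · rw [rowAt, dif_pos h]
    have h2 : (rIdx (m := m) (pp ⟨j.1, h⟩)).1 < n := (pp ⟨j.1, h⟩).2
    rw [posr, dif_pos h2]
    have : (⟨(rIdx (m := m) (pp ⟨j.1, h⟩)).1, h2⟩ : Fin n) = pp ⟨j.1, h⟩ := rfl
    rw [this, hqp]
  · rw [rowAt, dif_neg h, posr, dif_neg h]

lemma rowAt_injective (pp qq : Fin n → Fin n) (hqp : ∀ v, qq (pp v) = v) :
    Function.Injective (rowAt (m := m) pp) := by
  intro a b h
  have : posr (m := m) qq (rowAt pp a) = posr qq (rowAt pp b) := by rw [h]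
  rw [posr_rowAt pp qq hqp, posr_rowAt pp qq hqp] at this
  exact Fin.ext this

/-- index type for the tiles (with `d` dummy empty tiles for padding). -/
abbrev Idx (n m d : ℕ) (PS : Finset (Fin m)) :=
  Fin (m + 1) ⊕ (Fin (n - 1) ⊕ (({k : Fin m // k ∉ PS} × Bool) ⊕ Fin d))

variable {d : ℕ} {PS : Finset (Fin m)}

def XT (qq : Fin n → Fin n) (ep : Fin m → Bool → Fin n) :
    Idx n m d PS → Fin (n + m + 1) → Bool
  | .inl t, i => decide (posr qq i = n + t.1)
  | .inr (.inl i'), i => decide (i'.1 ≤ posr qq i ∧ posr qq i ≤ i'.1 + 1)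
  | .inr (.inr (.inl (k, s))), i => decide (posr qq i = (qq (ep k.1 s)).1)
  | .inr (.inr (.inr _)), _ => false

def YT (f : Fin (n - 1) → Fin m) : Idx n m d PS → Fin (3 * m + 1) → Bool
  | .inl t, c => decide (3 * t.1 - 1 ≤ poscAux m c.1 ∧ poscAux m c.1 ≤ min (3 * t.1 + 1) (3 * m))
  | .inr (.inl i'), c => decide (3 * (f i').1 + 1 ≤ poscAux m c.1 ∧ poscAux m c.1 ≤ 3 * (f i').1 + 2)
  | .inr (.inr (.inl (k, _))), c => decide (3 * k.1.1 + 1 ≤ poscAux m c.1 ∧ poscAux m c.1 ≤ 3 * k.1.1 + 2)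
  | .inr (.inr (.inr _)), _ => false

lemma isUnimodal_XT {K : ℕ} (pp qq : Fin n → Fin n) (ep : Fin m → Bool → Fin n)
    (hqp : ∀ v, qq (pp v) = v) (ι : Fin K → Idx n m d PS) :
    IsUnimodal (Matrix.of fun ℓ i => XT qq ep (ι ℓ) i) := by
  refine ⟨Equiv.ofBijective (rowAt pp)
    (Finite.injective_iff_bijective.mp (rowAt_injective pp qq hqp)), fun ℓ => ?_⟩
  simp only [Matrix.of_apply, Equiv.ofBijective_apply]
  obtain t | i' | ⟨k, s⟩ | u := ι ℓ
  · exact ⟨n + t.1, n + t.1, fun i => by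
      simp only [XT, decide_eq_true_eq, posr_rowAt pp qq hqp]; omega⟩
  · exact ⟨i'.1, i'.1 + 1, fun i => by
      simp only [XT, decide_eq_true_eq, posr_rowAt pp qq hqp]⟩
  · exact ⟨(qq (ep k.1 s)).1, (qq (ep k.1 s)).1, fun i => by
      simp only [XT, decide_eq_true_eq, posr_rowAt pp qq hqp]; omega⟩
  · exact ⟨1, 0, fun i => by simp only [XT, Bool.false_eq_true, false_iff, not_and, not_le]; omega⟩

lemma isUnimodal_YT {K : ℕ} (f : Fin (n - 1) → Fin m) (ι : Fin K → Idx n m d PS) :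
    IsUnimodal (Matrix.of fun ℓ c => YT f (ι ℓ) c) := by
  refine ⟨Equiv.ofBijective colAt
    (Finite.injective_iff_bijective.mp colAt_injective), fun ℓ => ?_⟩
  simp only [Matrix.of_apply, Equiv.ofBijective_apply]
  obtain t | i' | ⟨k, s⟩ | u := ι ℓ
  · exact ⟨3 * t.1 - 1, min (3 * t.1 + 1) (3 * m), fun c => by
      simp only [YT, decide_eq_true_eq, poscAux_colAt]⟩
  · exact ⟨3 * (f i').1 + 1, 3 * (f i').1 + 2, fun c => by
      simp only [YT, decide_eq_true_eq, poscAux_colAt]⟩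
  · exact ⟨3 * k.1.1 + 1, 3 * k.1.1 + 2, fun c => by
      simp only [YT, decide_eq_true_eq, poscAux_colAt]⟩
  · exact ⟨1, 0, fun c => by simp only [YT, Bool.false_eq_true, false_iff, not_and, not_le]; omega⟩

lemma col_mem (j : Fin (3 * m + 1)) (a : Fin m)
    (h1 : 3 * a.1 + 1 ≤ poscAux m j.1) (h2 : poscAux m j.1 ≤ 3 * a.1 + 2) :
    j = xIdx a ∨ j = yIdx a := by
  have hj := j.2; have ha := a.2
  rcases poscAux_cases m j.1 with ⟨hr, he⟩ | ⟨hr, hr2, he⟩ | ⟨hr, he⟩ <;> rw [he] at h1 h2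
  · exact Or.inl (Fin.ext (show j.1 = a.1 by omega))
  · exact Or.inr (Fin.ext (show j.1 = m + a.1 by omega))
  · exact absurd h2 (by omega)

lemma DG_eq (e : Fin m → Sym2 (Fin n)) (pp qq : Fin n → Fin n)
    (f : Fin (n - 1) → Fin m) (ep : Fin m → Bool → Fin n)
    (hpq : ∀ v, pp (qq v) = v) (hqp : ∀ v, qq (pp v) = v)
    (hf : ∀ (i : Fin (n - 1)) (h1 : i.1 < n) (h2 : i.1 + 1 < n),
      e (f i) = s(pp ⟨i.1, h1⟩, pp ⟨i.1 + 1, h2⟩))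
    (hn : 1 ≤ n)
    (hPS : ∀ k, k ∈ PS ↔ ∃ i, f i = k)
    (hep : ∀ k s, ep k s ∈ e k)
    (hepall : ∀ k v, v ∈ e k → v = ep k true ∨ v = ep k false)
    (i : Fin (n + m + 1)) (j : Fin (3 * m + 1)) :
    DG n m e i j = decide (∃ l : Idx n m d PS, XT qq ep l i = true ∧ YT f l j = true) := by
  rw [DG, Matrix.of_apply, decide_eq_decide]
  constructor
  · rintro (⟨v, k, rfl, hj, hv⟩ | ⟨t, rfl, hj⟩)
    · have hposc1 : 3 * k.1 + 1 ≤ poscAux m j.1 ∧ poscAux m j.1 ≤ 3 * k.1 + 2 := by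
        rcases hj with rfl | rfl
        · rw [poscAux_x]; omega
        · rw [poscAux_y]; omega
      by_cases hk : k ∈ PS
      · obtain ⟨i', rfl⟩ := (hPS k).mp hk
        have h1 : i'.1 < n := by have := i'.2; omega
        have h2 : i'.1 + 1 < n := by have := i'.2; omega
        refine ⟨.inr (.inl i'), ?_, ?_⟩
        · simp only [XT, decide_eq_true_eq, posr_rIdx]
          rw [hf i' h1 h2, Sym2.mem_iff] at hv
          rcases hv with rfl | rfl
          · rw [hqp]; exact ⟨le_refl _, Nat.le_succ _⟩
          · rw [hqp]; exact ⟨Nat.le_succ _, le_refl _⟩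
        · simp only [YT, decide_eq_true_eq]; exact hposc1
      · rcases hepall _ v hv with hv' | hv'
        · exact ⟨.inr (.inr (.inl (⟨k, hk⟩, true))),
            by simp only [XT, decide_eq_true_eq, posr_rIdx, hv'],
            by simp only [YT, decide_eq_true_eq]; exact hposc1⟩
        · exact ⟨.inr (.inr (.inl (⟨k, hk⟩, false))),
            by simp only [XT, decide_eq_true_eq, posr_rIdx, hv'],
            by simp only [YT, decide_eq_true_eq]; exact hposc1⟩
    · refine ⟨.inl t, by simp only [XT, decide_eq_true_eq, posr_sIdx], ?_⟩
      simp only [YT, decide_eq_true_eq]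
      have ht := t.2
      rcases hj with rfl | ⟨k, rfl, hk⟩ | ⟨k, rfl, hk⟩
      · rw [poscAux_z]; omega
      · rw [poscAux_y]; have := k.2; omega
      · rw [poscAux_x]; have := k.2; omega
  · rintro ⟨l, hX, hY⟩
    obtain t | i' | ⟨⟨k, hk⟩, s⟩ | u := l
    · simp only [XT, decide_eq_true_eq] at hX
      simp only [YT, decide_eq_true_eq] at hY
      have hi : i = sIdx t := by
        by_cases h : i.1 < n
        · exfalso; rw [posr, dif_pos h] at hX; have := (qq ⟨i.1, h⟩).2; omega
        · rw [posr, dif_neg h] at hX; exact Fin.ext hX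
      subst hi
      refine Or.inr ⟨t, rfl, ?_⟩
      have hj2 := j.2; have ht := t.2
      rcases poscAux_cases m j.1 with ⟨hr, he⟩ | ⟨hr, hr2, he⟩ | ⟨hr, he⟩ <;>
        rw [he] at hY
      · exact Or.inr (Or.inr ⟨⟨t.1, by omega⟩, Fin.ext (show j.1 = t.1 by omega), rfl⟩)
      · exact Or.inr (Or.inl ⟨⟨t.1 - 1, by omega⟩,
          Fin.ext (show j.1 = m + (t.1 - 1) by omega), show t.1 = t.1 - 1 + 1 by omega⟩)
      · exact Or.inl (Fin.ext (show j.1 = 2 * m + t.1 by omega))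
    · simp only [XT, decide_eq_true_eq] at hX
      simp only [YT, decide_eq_true_eq] at hY
      have h1 : i'.1 < n := by have := i'.2; omega
      have h2 : i'.1 + 1 < n := by have := i'.2; omega
      have hiv : i.1 < n := by
        by_contra h
        rw [posr, dif_neg h] at hX
        omega
      rw [posr, dif_pos hiv] at hX
      left
      refine ⟨⟨i.1, hiv⟩, f i', Fin.ext rfl, col_mem j (f i') hY.1 hY.2, ?_⟩
      rw [hf i' h1 h2, Sym2.mem_iff]
      rcases (show (qq ⟨i.1, hiv⟩).1 = i'.1 ∨ (qq ⟨i.1, hiv⟩).1 = i'.1 + 1 by omega) with h | h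
      · left
        have hqv : qq ⟨i.1, hiv⟩ = ⟨i'.1, h1⟩ := Fin.ext h
        have := congrArg pp hqv
        rwa [hpq] at this
      · right
        have hqv : qq ⟨i.1, hiv⟩ = ⟨i'.1 + 1, h2⟩ := Fin.ext h
        have := congrArg pp hqv
        rwa [hpq] at this
    · simp only [XT, decide_eq_true_eq] at hX
      simp only [YT, decide_eq_true_eq] at hY
      have hiv : i.1 < n := by
        by_contra h
        rw [posr, dif_neg h] at hX
        have := (qq (ep k s)).2; omega
      rw [posr, dif_pos hiv] at hX
      have hv : (⟨i.1, hiv⟩ : Fin n) = ep k s := by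
        have hqv : qq ⟨i.1, hiv⟩ = qq (ep k s) := Fin.ext hX
        have := congrArg pp hqv
        rwa [hpq, hpq] at this
      exact Or.inl ⟨⟨i.1, hiv⟩, k, Fin.ext rfl, col_mem j k hY.1 hY.2,
        by rw [hv]; exact hep k s⟩
    · exact absurd hX (by simp [XT])

end DGAux

open DGAux

/-- If `G` (with `n` vertices and `m` edges, enumerated injectively by `e`,
no loops) has a Hamiltonian path, then there exist unimodal binary matrices `X` of size
`k × (n+m+1)` and `Y` of size `k × (3m+1)` with `k = 3m − n + 2` such that
`D_G = X^T ∘ Y`. -/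
theorem dg_zero_error_of_hamiltonian_path (n m : ℕ) (e : Fin m → Sym2 (Fin n))
    (hloop : ∀ k, ¬ (e k).IsDiag) (hinj : Function.Injective e)
    (hham : HasHamiltonianPath e) :
    ∃ (X : Matrix (Fin (3 * m - n + 2)) (Fin (n + m + 1)) Bool)
      (Y : Matrix (Fin (3 * m - n + 2)) (Fin (3 * m + 1)) Bool),
      IsUnimodal X ∧ IsUnimodal Y ∧ DG n m e = boolProdT X Y := by
  rcases Nat.eq_zero_or_pos n with hn0 | hn
  · subst hn0
    have hm : m = 0 := by
      rcases Nat.eq_zero_or_pos m with h | h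
      · exact h
      · exact ((e ⟨0, h⟩).out.1).elim0
    subst hm
    refine ⟨Matrix.of fun _ _ => true, Matrix.of fun _ _ => true,
      ⟨Equiv.refl _, fun ℓ => ⟨0, 0, fun i => by
        have := i.2; simp only [Matrix.of_apply, Equiv.refl_apply]; simp⟩⟩,
      ⟨Equiv.refl _, fun ℓ => ⟨0, 0, fun i => by
        have := i.2; simp only [Matrix.of_apply, Equiv.refl_apply]; simp⟩⟩, ?_⟩
    ext i j
    have hi := i.2; have hj := j.2
    have hL : DG 0 0 e i j = true := by
      simp only [DG, Matrix.of_apply, decide_eq_true_eq]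
      exact Or.inr ⟨0, Fin.ext (by simp [sIdx]), Or.inl (Fin.ext (by simp [zIdx]))⟩
    rw [hL]
    simp only [boolProdT, Matrix.of_apply]
    symm
    rw [decide_eq_true_eq]
    exact ⟨⟨0, by omega⟩, by simp, by simp⟩
  · obtain ⟨p, hpbij, hpath⟩ := hham
    set q : Fin n → Fin n := fun v => (Equiv.ofBijective p hpbij).symm v with hqdef
    have hqp : ∀ v, q (p v) = v := fun v => (Equiv.ofBijective p hpbij).symm_apply_apply v
    have hpq : ∀ v, p (q v) = v := fun v => (Equiv.ofBijective p hpbij).apply_symm_apply v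
    have hex : ∀ i : Fin (n - 1), ∃ k : Fin m,
        e k = s(p ⟨i.1, by have := i.2; omega⟩, p ⟨i.1 + 1, by have := i.2; omega⟩) := by
      intro i
      exact Set.mem_range.mp
        (hpath ⟨i.1, by have := i.2; omega⟩ ⟨i.1 + 1, by have := i.2; omega⟩ rfl)
    choose f hf' using hex
    have hf : ∀ (i : Fin (n - 1)) (h1 : i.1 < n) (h2 : i.1 + 1 < n),
        e (f i) = s(p ⟨i.1, h1⟩, p ⟨i.1 + 1, h2⟩) := fun i h1 h2 => hf' i
    have hfinj : Function.Injective f := by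
      intro a b hab
      have h := hf' a
      rw [hab, hf' b, Sym2.eq_iff] at h
      rcases h with ⟨h1, h2⟩ | ⟨h1, h2⟩
      · have e1 : b.1 = a.1 := by simpa using hpbij.1 h1
        exact Fin.ext e1.symm
      · have e1 : b.1 = a.1 + 1 := by simpa using hpbij.1 h1
        have e2 : b.1 + 1 = a.1 := by simpa using hpbij.1 h2
        exact Fin.ext (by omega)
    set PS : Finset (Fin m) := Finset.image f Finset.univ with hPSdef
    have hPS : ∀ k, k ∈ PS ↔ ∃ i, f i = k := by
      intro k; simp [hPSdef]
    have hmn : n - 1 ≤ m := by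
      have := Fintype.card_le_of_injective f hfinj
      simpa using this
    have hPScard : PS.card = n - 1 := by
      rw [hPSdef, Finset.card_image_of_injective _ hfinj, Finset.card_univ, Fintype.card_fin]
    set d : ℕ := (3 * m - n + 2) - (m + 1 + (n - 1) + (m - (n - 1)) * 2) with hddef
    have hcard : Fintype.card (Idx n m d PS) = 3 * m - n + 2 := by
      have hc1 : Fintype.card {k : Fin m // k ∉ PS} = m - (n - 1) := by
        rw [Fintype.card_subtype_compl, Fintype.card_coe, hPScard, Fintype.card_fin]
      simp only [Idx, Fintype.card_sum, Fintype.card_prod, Fintype.card_fin,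
        Fintype.card_bool, hc1]
      omega
    set ep : Fin m → Bool → Fin n := fun k s => if s then (e k).out.1 else (e k).out.2
      with hepdef
    have hep : ∀ k s, ep k s ∈ e k := by
      intro k s
      cases s
      · exact Sym2.out_snd_mem _
      · exact Sym2.out_fst_mem _
    have hout : ∀ k : Fin m, e k = s((e k).out.1, (e k).out.2) := by
      intro k
      rw [Sym2.mk, Prod.mk.eta, (e k).out_eq]
    have hepall : ∀ k v, v ∈ e k → v = ep k true ∨ v = ep k false := by
      intro k v hv
      rw [hout k, Sym2.mem_iff] at hv
      exact hv
    set ι : Fin (3 * m - n + 2) ≃ Idx n m d PS :=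
      (finCongr hcard.symm).trans (Fintype.equivFin _).symm with hιdef
    refine ⟨Matrix.of fun ℓ i => XT q ep (ι ℓ) i, Matrix.of fun ℓ c => YT f (ι ℓ) c,
      isUnimodal_XT p q ep hqp _, isUnimodal_YT f _, ?_⟩
    ext i j
    rw [DG_eq e p q f ep hpq hqp hf hn hPS hep hepall i j]
    simp only [boolProdT, Matrix.of_apply]
    refine decide_eq_decide.mpr ?_
    constructor
    · rintro ⟨l, hX, hY⟩
      refine ⟨ι.symm l, ?_, ?_⟩
      · rwa [Equiv.apply_symm_apply]
      · rwa [Equiv.apply_symm_apply]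
    · rintro ⟨ℓ, hX, hY⟩
      exact ⟨ι ℓ, hX, hY⟩
end

section
/- Let T be a pq-tree over a finite set U with weights w : U → ℤ, and let v be a q-node of T with children c_1, …, c_ℓ (ℓ ≥ 2) in their given order. Then border(v) = max(x, y), where x = max_{1 ≤ i ≤ ℓ} ( border(c_i) + Σ_{j=1}^{i−1} total(c_j) ) and y = max_{1 ≤ i ≤ ℓ} ( border(c_i) + Σ_{j=i+1}^{ℓ} total(c_j) ). -/
/-- A pq-tree: leaves carry elements of `U`; the children of each internal node
(a p-node or a q-node) are given as a sequence. -/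
inductive PQTree (U : Type) : Type where
  | leaf : U → PQTree U
  | pnode : List (PQTree U) → PQTree U
  | qnode : List (PQTree U) → PQTree U

namespace PQTree

variable {U : Type}

/-- The list of leaves below a node, read left to right in the given order. -/
def leaves : PQTree U → List U
  | leaf u => [u]
  | pnode cs => cs.attach.flatMap (fun c => leaves c.1)
  | qnode cs => cs.attach.flatMap (fun c => leaves c.1)
  decreasing_by
  · have := List.sizeOf_lt_of_mem c.2; simp; omega
  · have := List.sizeOf_lt_of_mem c.2; simp; omega

/-- `total(v) = Σ_{u ∈ leaves(v)} w(u)`. -/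
def total (w : U → ℤ) (t : PQTree U) : ℤ :=
  ((leaves t).map w).sum

/-- `IsFrontier t l` holds when `l` is a frontier order of the pq-tree `t`: a linear order
of its leaves obtained by reading the leaves left to right after independently permuting
the children sequence of each p-node arbitrarily and either keeping or reversing the
children sequence of each q-node. -/
inductive IsFrontier : PQTree U → List U → Prop where
  | leaf (u : U) : IsFrontier (leaf u) [u]
  | pnode (cs cs' : List (PQTree U)) (fs : List (List U)) :
      cs'.Perm cs → List.Forall₂ IsFrontier cs' fs →
      IsFrontier (pnode cs) fs.flatten
  | qnodeKeep (cs : List (PQTree U)) (fs : List (List U)) :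
      List.Forall₂ IsFrontier cs fs →
      IsFrontier (qnode cs) fs.flatten
  | qnodeRev (cs : List (PQTree U)) (fs : List (List U)) :
      List.Forall₂ IsFrontier cs.reverse fs →
      IsFrontier (qnode cs) fs.flatten

variable [DecidableEq U]

/-- `S` is compatible with the pq-tree `t`: some frontier order of `t` has a contiguous
segment whose elements are exactly `S` (in particular `S = ∅` is compatible). -/
def Compatible (S : Finset U) (t : PQTree U) : Prop :=
  ∃ l l₁ l₂ l₃ : List U, IsFrontier t l ∧ l = l₁ ++ l₂ ++ l₃ ∧ l₂.toFinset = S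

/-- `S` is border-compatible with the pq-tree `t`: `S` is nonempty and in some frontier
order of `t` the elements of `S` occupy a set of consecutive positions containing the
first or the last position, i.e. `S` is a prefix or a suffix of the frontier. -/
def BorderCompatible (S : Finset U) (t : PQTree U) : Prop :=
  S.Nonempty ∧ ∃ l l₁ l₂ : List U, IsFrontier t l ∧ l = l₁ ++ l₂ ∧
    (l₁.toFinset = S ∨ l₂.toFinset = S)

/-- `inner(v)`: the maximum of `Σ_{u∈S} w(u)` over all sets `S` compatible with the
subtree at `v` (including `S = ∅`, so `inner(v) ≥ 0`). -/
noncomputable def inner (w : U → ℤ) (t : PQTree U) : ℤ :=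
  sSup {z : ℤ | ∃ S : Finset U, Compatible S t ∧ z = ∑ u ∈ S, w u}

/-- `border(v)`: the maximum of `Σ_{u∈S} w(u)` over all (nonempty) sets `S`
border-compatible with the subtree at `v`. -/
noncomputable def border (w : U → ℤ) (t : PQTree U) : ℤ :=
  sSup {z : ℤ | ∃ S : Finset U, BorderCompatible S t ∧ z = ∑ u ∈ S, w u}

/-- A well-formed pq-tree: every internal node has a nonempty sequence of children
(so every subtree has at least one leaf). -/
inductive Proper : PQTree U → Prop where
  | leaf (u : U) : Proper (leaf u)
  | pnode (cs : List (PQTree U)) : cs ≠ [] → (∀ c ∈ cs, Proper c) → Proper (pnode cs)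
  | qnode (cs : List (PQTree U)) : cs ≠ [] → (∀ c ∈ cs, Proper c) → Proper (qnode cs)


lemma leaves_pnode (cs : List (PQTree U)) : leaves (pnode cs) = (cs.map leaves).flatten := by
  rw [leaves]; simp [List.flatMap, List.attach, List.attachWith, List.map_pmap]

lemma leaves_qnode (cs : List (PQTree U)) : leaves (qnode cs) = (cs.map leaves).flatten := by
  rw [leaves]; simp [List.flatMap, List.attach, List.attachWith, List.map_pmap]

lemma forall₂_exists {α β : Type*} {P : α → β → Prop} :
    ∀ {cs : List α}, (∀ c ∈ cs, ∃ l, P c l) → ∃ fs, List.Forall₂ P cs fs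
  | [], _ => ⟨[], List.Forall₂.nil⟩
  | c :: cs, h => by
    obtain ⟨l, hl⟩ := h c (by simp)
    obtain ⟨fs, hfs⟩ := forall₂_exists (fun d hd => h d (List.mem_cons_of_mem _ hd))
    exact ⟨l :: fs, List.Forall₂.cons hl hfs⟩

lemma flatten_perm_of_forall₂ {ds : List (PQTree U)} {fs : List (List U)}
    (h : List.Forall₂ (fun d f => f.Perm (leaves d)) ds fs) :
    fs.flatten.Perm ((ds.map leaves).flatten) := by
  induction h with
  | nil => simp
  | cons h _ ih => simpa using h.append ih

lemma forall₂_perm_of_IH {ds : List (PQTree U)} {fs : List (List U)}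
    (hf : List.Forall₂ IsFrontier ds fs)
    (IH : ∀ d ∈ ds, ∀ f, IsFrontier d f → f.Perm (leaves d)) :
    List.Forall₂ (fun d f => f.Perm (leaves d)) ds fs := by
  induction hf with
  | nil => exact .nil
  | @cons d f ds fs h _ ih =>
    exact .cons (IH d (by simp) f h) (ih (fun c hc => IH c (List.mem_cons_of_mem _ hc)))

lemma sizeOf_lt_pnode {d : PQTree U} {cs : List (PQTree U)} (hd : d ∈ cs) :
    sizeOf d < sizeOf (pnode cs) := by
  have := List.sizeOf_lt_of_mem hd; simp; omega

lemma sizeOf_lt_qnode {d : PQTree U} {cs : List (PQTree U)} (hd : d ∈ cs) :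
    sizeOf d < sizeOf (qnode cs) := by
  have := List.sizeOf_lt_of_mem hd; simp; omega

theorem frontier_perm : ∀ (t : PQTree U) (l : List U), IsFrontier t l → l.Perm (leaves t)
  | t, l, h => by
    have IH : ∀ d, sizeOf d < sizeOf t → ∀ f, IsFrontier d f → f.Perm (leaves d) :=
      fun d hd => frontier_perm d
    cases h with
    | leaf u => simp [leaves]
    | pnode cs cs' fs hperm hf =>
      have key := forall₂_perm_of_IH hf
        (fun d hd => IH d (sizeOf_lt_pnode (hperm.subset hd)))
      refine (flatten_perm_of_forall₂ key).trans ?_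
      rw [leaves_pnode]
      exact ((hperm.map leaves).flatten)
    | qnodeKeep cs fs hf =>
      have key := forall₂_perm_of_IH hf (fun d hd => IH d (sizeOf_lt_qnode hd))
      rw [leaves_qnode]
      exact flatten_perm_of_forall₂ key
    | qnodeRev cs fs hf =>
      have key := forall₂_perm_of_IH hf
        (fun d hd => IH d (sizeOf_lt_qnode (List.mem_reverse.mp hd)))
      refine (flatten_perm_of_forall₂ key).trans ?_
      rw [leaves_qnode]
      exact ((cs.reverse_perm).map leaves).flatten
  termination_by t => sizeOf t
  decreasing_by exact hd

theorem exists_frontier : ∀ {t : PQTree U}, Proper t → ∃ l, IsFrontier t l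
  | t, h => by
    have IH : ∀ d, sizeOf d < sizeOf t → Proper d → ∃ l, IsFrontier d l :=
      fun d hd => exists_frontier
    cases h with
    | leaf u => exact ⟨[u], .leaf u⟩
    | pnode cs hne hall =>
      obtain ⟨fs, hfs⟩ := forall₂_exists (fun c hc => IH c (sizeOf_lt_pnode hc) (hall c hc))
      exact ⟨fs.flatten, .pnode cs cs fs (List.Perm.refl _) hfs⟩
    | qnode cs hne hall =>
      obtain ⟨fs, hfs⟩ := forall₂_exists (fun c hc => IH c (sizeOf_lt_qnode hc) (hall c hc))
      exact ⟨fs.flatten, .qnodeKeep cs fs hfs⟩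
  termination_by t => sizeOf t
  decreasing_by exact hd

theorem leaves_ne_nil : ∀ {t : PQTree U}, Proper t → leaves t ≠ []
  | t, h => by
    have IH : ∀ d, sizeOf d < sizeOf t → Proper d → leaves d ≠ [] :=
      fun d hd => leaves_ne_nil
    cases h with
    | leaf u => simp [leaves]
    | pnode cs hne hall =>
      rw [leaves_pnode]
      obtain ⟨c, cs', rfl⟩ := List.exists_cons_of_ne_nil hne
      have h1 := IH c (sizeOf_lt_pnode (by simp)) (hall c (by simp))
      simp only [List.map_cons, List.flatten_cons, ne_eq, List.append_eq_nil_iff]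
      tauto
    | qnode cs hne hall =>
      rw [leaves_qnode]
      obtain ⟨c, cs', rfl⟩ := List.exists_cons_of_ne_nil hne
      have h1 := IH c (sizeOf_lt_qnode (by simp)) (hall c (by simp))
      simp only [List.map_cons, List.flatten_cons, ne_eq, List.append_eq_nil_iff]
      tauto
  termination_by t => sizeOf t
  decreasing_by exact hd

theorem frontier_ne_nil {t : PQTree U} {l : List U} (hp : Proper t) (h : IsFrontier t l) :
    l ≠ [] := by
  intro hl
  exact leaves_ne_nil hp (List.Perm.nil_eq ((hl ▸ frontier_perm t l h))).symm

theorem frontier_sum (w : U → ℤ) {t : PQTree U} {l : List U} (h : IsFrontier t l) :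
    (l.map w).sum = total w t :=
  List.Perm.sum_eq ((frontier_perm t l h).map w)

variable [DecidableEq U]

lemma borderCompatible_subset {S : Finset U} {t : PQTree U} (h : BorderCompatible S t) :
    S ⊆ (leaves t).toFinset := by
  obtain ⟨hne, l, l₁, l₂, hf, rfl, hS⟩ := h
  have hperm := frontier_perm _ _ hf
  intro u hu
  rw [List.mem_toFinset]
  refine hperm.subset ?_
  rcases hS with rfl | rfl <;> rw [List.mem_toFinset] at hu <;> simp [hu]

lemma borderSet_finite (w : U → ℤ) (t : PQTree U) :
    {z : ℤ | ∃ S : Finset U, BorderCompatible S t ∧ z = ∑ u ∈ S, w u}.Finite := by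
  apply Set.Finite.subset (Set.Finite.image (fun S : Finset U => ∑ u ∈ S, w u)
    (((leaves t).toFinset.powerset : Finset (Finset U)).finite_toSet))
  rintro z ⟨S, hS, rfl⟩
  refine ⟨S, ?_, rfl⟩
  simp only [Finset.coe_powerset, Set.mem_preimage, Set.mem_powerset_iff, Finset.coe_subset]
  exact borderCompatible_subset hS

lemma borderSet_nonempty (w : U → ℤ) {t : PQTree U} (hp : Proper t) :
    {z : ℤ | ∃ S : Finset U, BorderCompatible S t ∧ z = ∑ u ∈ S, w u}.Nonempty := by
  obtain ⟨l, hl⟩ := exists_frontier hp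
  refine ⟨∑ u ∈ l.toFinset, w u, l.toFinset, ⟨?_, l, l, [], hl, by simp, Or.inl rfl⟩, rfl⟩
  have := frontier_ne_nil hp hl
  simpa [List.toFinset_nonempty_iff] using this

lemma le_border {w : U → ℤ} {S : Finset U} {t : PQTree U} (h : BorderCompatible S t) :
    (∑ u ∈ S, w u) ≤ border w t :=
  le_csSup (borderSet_finite w t).bddAbove ⟨S, h, rfl⟩

lemma border_attained (w : U → ℤ) {t : PQTree U} (hp : Proper t) :
    ∃ S : Finset U, BorderCompatible S t ∧ border w t = ∑ u ∈ S, w u :=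
  (borderSet_nonempty w hp).csSup_mem (borderSet_finite w t)

lemma flatten_split : ∀ (fs : List (List U)), fs ≠ [] → ∀ (l₁ l₂ : List U),
    l₁ ++ l₂ = fs.flatten →
    ∃ fs₁ m₁ m₂ fs₂, fs = fs₁ ++ (m₁ ++ m₂) :: fs₂ ∧
      l₁ = fs₁.flatten ++ m₁ ∧ l₂ = m₂ ++ fs₂.flatten
  | [], hne, _, _, _ => absurd rfl hne
  | [a], _, l₁, l₂, h => by
    refine ⟨[], l₁, l₂, [], ?_, by simp, by simp⟩
    simp only [List.flatten_cons, List.flatten_nil, List.append_nil] at h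
    simp [← h]
  | a :: b :: fs', _, l₁, l₂, h => by
    rw [List.flatten_cons] at h
    rcases List.append_eq_append_iff.mp h with ⟨a', ha, hl₂⟩ | ⟨c', hl₁, hrest⟩
    · exact ⟨[], l₁, a', b :: fs', by simp [← ha], by simp, hl₂⟩
    · obtain ⟨fs₁, m₁, m₂, fs₂, h1, h2, h3⟩ :=
        flatten_split (b :: fs') (by simp) c' l₂ hrest.symm
      exact ⟨a :: fs₁, m₁, m₂, fs₂, by simp [h1], by simp [hl₁, h2], h3⟩

lemma frontiers_sum (w : U → ℤ) {ds : List (PQTree U)} {fs : List (List U)}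
    (h : List.Forall₂ IsFrontier ds fs) :
    (fs.flatten.map w).sum = ((ds.map (total w)).sum) := by
  induction h with
  | nil => simp
  | cons h _ ih =>
    simp only [List.flatten_cons, List.map_append, List.sum_append, List.map_cons,
      List.sum_cons, frontier_sum w h, ih]

lemma prefix_bound_core (w : U → ℤ) {D : List (PQTree U)} {F : List (List U)}
    {d : PQTree U} {p q : List U}
    (hF : List.Forall₂ IsFrontier D F) (hd : IsFrontier d (p ++ q)) (hp : p ≠ [])
    (hnd : p.Nodup) :
    ((F.flatten ++ p).map w).sum ≤ border w d + (D.map (total w)).sum := by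
  have h1 : ((F.flatten).map w).sum = (D.map (total w)).sum := frontiers_sum w hF
  have h2 : (p.map w).sum ≤ border w d := by
    have hbc : BorderCompatible p.toFinset d :=
      ⟨by simpa [List.toFinset_nonempty_iff] using hp, p ++ q, p, q, hd, rfl, Or.inl rfl⟩
    have := le_border (w := w) hbc
    rwa [List.sum_toFinset w hnd] at this
  rw [List.map_append, List.sum_append, h1]
  omega

lemma suffix_bound_core (w : U → ℤ) {D : List (PQTree U)} {F : List (List U)}
    {d : PQTree U} {p q : List U}
    (hF : List.Forall₂ IsFrontier D F) (hd : IsFrontier d (p ++ q)) (hq : q ≠ [])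
    (hnd : q.Nodup) :
    ((q ++ F.flatten).map w).sum ≤ border w d + (D.map (total w)).sum := by
  have h1 : ((F.flatten).map w).sum = (D.map (total w)).sum := frontiers_sum w hF
  have h2 : (q.map w).sum ≤ border w d := by
    have hbc : BorderCompatible q.toFinset d :=
      ⟨by simpa [List.toFinset_nonempty_iff] using hq, p ++ q, p, q, hd, rfl, Or.inr rfl⟩
    have := le_border (w := w) hbc
    rwa [List.sum_toFinset w hnd] at this
  rw [List.map_append, List.sum_append, h1]
  omega

lemma forall₂_middle {ds : List (PQTree U)} {fs₁ fs₂ : List (List U)} {m : List U}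
    (h : List.Forall₂ IsFrontier ds (fs₁ ++ m :: fs₂)) :
    ∃ d, ds[fs₁.length]? = some d ∧ IsFrontier d m ∧
      List.Forall₂ IsFrontier (ds.take fs₁.length) fs₁ ∧
      List.Forall₂ IsFrontier (ds.drop (fs₁.length + 1)) fs₂ ∧ d ∈ ds := by
  have h1 := List.forall₂_take_append ds fs₁ (m :: fs₂) h
  have h2 := List.forall₂_drop_append ds fs₁ (m :: fs₂) h
  rw [List.forall₂_cons_right_iff] at h2
  obtain ⟨d, ds₂, hdm, hds₂, heq⟩ := h2
  refine ⟨d, ?_, hdm, h1, ?_, ?_⟩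
  · rw [show fs₁.length = fs₁.length + 0 by omega, ← List.getElem?_drop, heq]
    simp
  · rw [show fs₁.length + 1 = fs₁.length + 1 by rfl, ← List.drop_drop, heq]
    simpa using hds₂
  · exact (List.drop_subset _ ds) (heq ▸ (show d ∈ d :: ds₂ from List.mem_cons_self))

lemma prefix_bound (w : U → ℤ) {ds : List (PQTree U)} {fs : List (List U)} {l₁ l₂ : List U}
    (hprop : ∀ d ∈ ds, Proper d) (hf : List.Forall₂ IsFrontier ds fs)
    (hsplit : l₁ ++ l₂ = fs.flatten) (hne : l₁ ≠ []) (hnd : l₁.Nodup) :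
    ∃ k, ∃ hk : k < ds.length,
      (l₁.map w).sum ≤ border w ds[k] + (((ds.take k).map (total w)).sum) := by
  have hfs : fs ≠ [] := by
    rintro rfl
    simp only [List.flatten_nil, List.append_eq_nil_iff] at hsplit
    exact hne hsplit.1
  obtain ⟨fs₁, m₁, m₂, fs₂, hfs_eq, hl₁, hl₂⟩ := flatten_split fs hfs l₁ l₂ hsplit
  by_cases hm₁ : m₁ = []
  · subst hm₁
    simp only [List.append_nil] at hl₁
    have hfs₁ : fs₁ ≠ [] := by rintro rfl; simp at hl₁; exact hne hl₁
    obtain ⟨fs₁', m, hfs₁'⟩ := (fs₁.eq_nil_or_concat').resolve_left hfs₁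
    subst hfs₁'
    have hfs_eq' : fs = fs₁' ++ m :: ([] ++ m₂) :: fs₂ := by simpa using hfs_eq
    rw [hfs_eq'] at hf
    obtain ⟨d, hget, hdm, htake, _, hmem⟩ := forall₂_middle hf
    obtain ⟨hk, hd⟩ := List.getElem?_eq_some_iff.mp hget
    refine ⟨fs₁'.length, hk, ?_⟩
    rw [hd]
    have hl₁' : l₁ = fs₁'.flatten ++ m := by simp [hl₁]
    have hmne : m ≠ [] := frontier_ne_nil (hprop d hmem) hdm
    have hmnd : m.Nodup := (hl₁' ▸ hnd).of_append_right
    have := prefix_bound_core w (d := d) (p := m) (q := []) htake (by simpa using hdm) hmne hmnd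
    rw [hl₁']
    exact this
  · rw [hfs_eq] at hf
    obtain ⟨d, hget, hdm, htake, _, hmem⟩ := forall₂_middle hf
    obtain ⟨hk, hd⟩ := List.getElem?_eq_some_iff.mp hget
    refine ⟨fs₁.length, hk, ?_⟩
    rw [hd]
    have hmnd : m₁.Nodup := (hl₁ ▸ hnd).of_append_right
    have := prefix_bound_core w (d := d) htake hdm hm₁ hmnd
    rw [hl₁]
    exact this

lemma suffix_bound (w : U → ℤ) {ds : List (PQTree U)} {fs : List (List U)} {l₁ l₂ : List U}
    (hprop : ∀ d ∈ ds, Proper d) (hf : List.Forall₂ IsFrontier ds fs)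
    (hsplit : l₁ ++ l₂ = fs.flatten) (hne : l₂ ≠ []) (hnd : l₂.Nodup) :
    ∃ k, ∃ hk : k < ds.length,
      (l₂.map w).sum ≤ border w ds[k] + (((ds.drop (k+1)).map (total w)).sum) := by
  have hfs : fs ≠ [] := by
    rintro rfl
    simp only [List.flatten_nil, List.append_eq_nil_iff] at hsplit
    exact hne hsplit.2
  obtain ⟨fs₁, m₁, m₂, fs₂, hfs_eq, hl₁, hl₂⟩ := flatten_split fs hfs l₁ l₂ hsplit
  by_cases hm₂ : m₂ = []
  · subst hm₂
    simp only [List.nil_append] at hl₂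
    have hfs₂ : fs₂ ≠ [] := by rintro rfl; simp at hl₂; exact hne hl₂
    obtain ⟨m, fs₂', hfs₂'⟩ := List.exists_cons_of_ne_nil hfs₂
    subst hfs₂'
    have hfs_eq' : fs = (fs₁ ++ [m₁ ++ []]) ++ ([] ++ m) :: fs₂' := by simpa using hfs_eq
    rw [hfs_eq'] at hf
    obtain ⟨d, hget, hdm, _, hdrop, hmem⟩ := forall₂_middle hf
    set k := (fs₁ ++ [m₁ ++ []]).length with hkdef
    obtain ⟨hk, hd⟩ := List.getElem?_eq_some_iff.mp hget
    refine ⟨k, hk, ?_⟩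
    rw [hd]
    have hl₂' : l₂ = m ++ fs₂'.flatten := by simp [hl₂]
    have hmne : m ≠ [] := by
      have := frontier_ne_nil (hprop d hmem) hdm; simpa using this
    have hmnd : m.Nodup := by
      rw [hl₂'] at hnd; exact hnd.of_append_left
    have := suffix_bound_core w (d := d) (p := []) (q := m) hdrop hdm hmne hmnd
    rw [hl₂']
    exact this
  · rw [hfs_eq] at hf
    obtain ⟨d, hget, hdm, _, hdrop, hmem⟩ := forall₂_middle hf
    obtain ⟨hk, hd⟩ := List.getElem?_eq_some_iff.mp hget
    refine ⟨fs₁.length, hk, ?_⟩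
    rw [hd]
    have hmnd : m₂.Nodup := by
      rw [hl₂] at hnd; exact hnd.of_append_left
    have := suffix_bound_core w (d := d) hdrop hdm hm₂ hmnd
    rw [hl₂]
    exact this

lemma forall₂_append_both {α β : Type*} {R : α → β → Prop} {l₁ u₁ : List α} {l₂ u₂ : List β}
    (h1 : List.Forall₂ R l₁ l₂) (h2 : List.Forall₂ R u₁ u₂) :
    List.Forall₂ R (l₁ ++ u₁) (l₂ ++ u₂) := by
  induction h1 with
  | nil => exact h2
  | cons h _ ih => exact .cons h ih

lemma leaves_child_nodup {ds : List (PQTree U)} (hnd : (leaves (qnode ds)).Nodup)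
    {d : PQTree U} (hd : d ∈ ds) : (leaves d).Nodup := by
  rw [leaves_qnode, List.nodup_flatten] at hnd
  exact hnd.1 _ (List.mem_map_of_mem (f := leaves) hd)

/-- Construction: keep orientation, prefix piece of child k at position k. -/
lemma construct_keep_prefix (w : U → ℤ) {ds : List (PQTree U)}
    (hprop : ∀ d ∈ ds, Proper d) (hnd : (leaves (qnode ds)).Nodup)
    {k : ℕ} (hk : k < ds.length) {f₁ f₂ : List U}
    (hf : IsFrontier ds[k] (f₁ ++ f₂)) (hne : f₁ ≠ []) :
    (f₁.map w).sum + ((ds.take k).map (total w)).sum ≤ border w (qnode ds) := by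
  obtain ⟨gs₁, hgs₁⟩ := forall₂_exists
    (fun d hd => exists_frontier (hprop d ((List.take_subset k ds) hd)))
  obtain ⟨gs₂, hgs₂⟩ := forall₂_exists
    (fun d hd => exists_frontier (hprop d ((List.drop_subset (k+1) ds) hd)))
  have hds : ds = ds.take k ++ ds[k] :: ds.drop (k+1) := by
    conv_lhs => rw [← List.take_append_drop k ds]
    rw [List.drop_eq_getElem_cons hk]
  have hfor : List.Forall₂ IsFrontier ds (gs₁ ++ (f₁ ++ f₂) :: gs₂) := by
    rw [hds]; exact forall₂_append_both hgs₁ (.cons hf hgs₂)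
  have hfront : IsFrontier (qnode ds) ((gs₁ ++ (f₁ ++ f₂) :: gs₂).flatten) :=
    .qnodeKeep ds _ hfor
  have hflat : (gs₁ ++ (f₁ ++ f₂) :: gs₂).flatten =
      (gs₁.flatten ++ f₁) ++ (f₂ ++ gs₂.flatten) := by
    simp [List.flatten_append]
  have hlnd : ((gs₁.flatten ++ f₁) ++ (f₂ ++ gs₂.flatten)).Nodup := by
    rw [← hflat]
    exact ((frontier_perm _ _ hfront).nodup_iff).mpr hnd
  have hbc : BorderCompatible (gs₁.flatten ++ f₁).toFinset (qnode ds) := by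
    refine ⟨?_, _, _, _, hfront, hflat, Or.inl rfl⟩
    rw [List.toFinset_nonempty_iff]
    simp [hne]
  have := le_border (w := w) hbc
  rw [List.sum_toFinset w hlnd.of_append_left, List.map_append, List.sum_append,
    frontiers_sum w hgs₁] at this
  omega

/-- Construction: reversed orientation, suffix piece of child k; takes weight of children before k. -/
lemma construct_rev_suffix (w : U → ℤ) {ds : List (PQTree U)}
    (hprop : ∀ d ∈ ds, Proper d) (hnd : (leaves (qnode ds)).Nodup)
    {k : ℕ} (hk : k < ds.length) {f₁ f₂ : List U}
    (hf : IsFrontier ds[k] (f₁ ++ f₂)) (hne : f₂ ≠ []) :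
    (f₂.map w).sum + ((ds.take k).map (total w)).sum ≤ border w (qnode ds) := by
  obtain ⟨gs₁, hgs₁⟩ := forall₂_exists (cs := (ds.take k).reverse)
    (fun d hd => exists_frontier (hprop d ((List.take_subset k ds) (List.mem_reverse.mp hd))))
  obtain ⟨gs₂, hgs₂⟩ := forall₂_exists (cs := (ds.drop (k+1)).reverse)
    (fun d hd => exists_frontier (hprop d ((List.drop_subset (k+1) ds) (List.mem_reverse.mp hd))))
  have hds : ds.reverse = (ds.drop (k+1)).reverse ++ ds[k] :: (ds.take k).reverse := by
    conv_lhs => rw [← List.take_append_drop k ds]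
    rw [List.drop_eq_getElem_cons hk]
    simp
  have hfor : List.Forall₂ IsFrontier ds.reverse (gs₂ ++ (f₁ ++ f₂) :: gs₁) := by
    rw [hds]; exact forall₂_append_both hgs₂ (.cons hf hgs₁)
  have hfront : IsFrontier (qnode ds) ((gs₂ ++ (f₁ ++ f₂) :: gs₁).flatten) :=
    .qnodeRev ds _ hfor
  have hflat : (gs₂ ++ (f₁ ++ f₂) :: gs₁).flatten =
      (gs₂.flatten ++ f₁) ++ (f₂ ++ gs₁.flatten) := by
    simp [List.flatten_append]
  have hlnd : ((gs₂.flatten ++ f₁) ++ (f₂ ++ gs₁.flatten)).Nodup := by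
    rw [← hflat]
    exact ((frontier_perm _ _ hfront).nodup_iff).mpr hnd
  have hbc : BorderCompatible (f₂ ++ gs₁.flatten).toFinset (qnode ds) := by
    refine ⟨?_, _, _, _, hfront, hflat, Or.inr rfl⟩
    rw [List.toFinset_nonempty_iff]
    simp [hne]
  have := le_border (w := w) hbc
  rw [List.sum_toFinset w hlnd.of_append_right, List.map_append, List.sum_append,
    frontiers_sum w hgs₁] at this
  rw [show ((ds.take k).reverse.map (total w)).sum = ((ds.take k).map (total w)).sum by
    rw [List.map_reverse, List.sum_reverse]] at this
  omega

/-- Construction: keep orientation, suffix piece of child k; takes weight of children after k. -/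
lemma construct_keep_suffix (w : U → ℤ) {ds : List (PQTree U)}
    (hprop : ∀ d ∈ ds, Proper d) (hnd : (leaves (qnode ds)).Nodup)
    {k : ℕ} (hk : k < ds.length) {f₁ f₂ : List U}
    (hf : IsFrontier ds[k] (f₁ ++ f₂)) (hne : f₂ ≠ []) :
    (f₂.map w).sum + ((ds.drop (k+1)).map (total w)).sum ≤ border w (qnode ds) := by
  obtain ⟨gs₁, hgs₁⟩ := forall₂_exists
    (fun d hd => exists_frontier (hprop d ((List.take_subset k ds) hd)))
  obtain ⟨gs₂, hgs₂⟩ := forall₂_exists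
    (fun d hd => exists_frontier (hprop d ((List.drop_subset (k+1) ds) hd)))
  have hds : ds = ds.take k ++ ds[k] :: ds.drop (k+1) := by
    conv_lhs => rw [← List.take_append_drop k ds]
    rw [List.drop_eq_getElem_cons hk]
  have hfor : List.Forall₂ IsFrontier ds (gs₁ ++ (f₁ ++ f₂) :: gs₂) := by
    rw [hds]; exact forall₂_append_both hgs₁ (.cons hf hgs₂)
  have hfront : IsFrontier (qnode ds) ((gs₁ ++ (f₁ ++ f₂) :: gs₂).flatten) :=
    .qnodeKeep ds _ hfor
  have hflat : (gs₁ ++ (f₁ ++ f₂) :: gs₂).flatten =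
      (gs₁.flatten ++ f₁) ++ (f₂ ++ gs₂.flatten) := by
    simp [List.flatten_append]
  have hlnd : ((gs₁.flatten ++ f₁) ++ (f₂ ++ gs₂.flatten)).Nodup := by
    rw [← hflat]
    exact ((frontier_perm _ _ hfront).nodup_iff).mpr hnd
  have hbc : BorderCompatible (f₂ ++ gs₂.flatten).toFinset (qnode ds) := by
    refine ⟨?_, _, _, _, hfront, hflat, Or.inr rfl⟩
    rw [List.toFinset_nonempty_iff]
    simp [hne]
  have := le_border (w := w) hbc
  rw [List.sum_toFinset w hlnd.of_append_right, List.map_append, List.sum_append,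
    frontiers_sum w hgs₂] at this
  omega

/-- Construction: reversed orientation, prefix piece of child k; takes weight of children after k. -/
lemma construct_rev_prefix (w : U → ℤ) {ds : List (PQTree U)}
    (hprop : ∀ d ∈ ds, Proper d) (hnd : (leaves (qnode ds)).Nodup)
    {k : ℕ} (hk : k < ds.length) {f₁ f₂ : List U}
    (hf : IsFrontier ds[k] (f₁ ++ f₂)) (hne : f₁ ≠ []) :
    (f₁.map w).sum + ((ds.drop (k+1)).map (total w)).sum ≤ border w (qnode ds) := by
  obtain ⟨gs₁, hgs₁⟩ := forall₂_exists (cs := (ds.take k).reverse)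
    (fun d hd => exists_frontier (hprop d ((List.take_subset k ds) (List.mem_reverse.mp hd))))
  obtain ⟨gs₂, hgs₂⟩ := forall₂_exists (cs := (ds.drop (k+1)).reverse)
    (fun d hd => exists_frontier (hprop d ((List.drop_subset (k+1) ds) (List.mem_reverse.mp hd))))
  have hds : ds.reverse = (ds.drop (k+1)).reverse ++ ds[k] :: (ds.take k).reverse := by
    conv_lhs => rw [← List.take_append_drop k ds]
    rw [List.drop_eq_getElem_cons hk]
    simp
  have hfor : List.Forall₂ IsFrontier ds.reverse (gs₂ ++ (f₁ ++ f₂) :: gs₁) := by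
    rw [hds]; exact forall₂_append_both hgs₂ (.cons hf hgs₁)
  have hfront : IsFrontier (qnode ds) ((gs₂ ++ (f₁ ++ f₂) :: gs₁).flatten) :=
    .qnodeRev ds _ hfor
  have hflat : (gs₂ ++ (f₁ ++ f₂) :: gs₁).flatten =
      (gs₂.flatten ++ f₁) ++ (f₂ ++ gs₁.flatten) := by
    simp [List.flatten_append]
  have hlnd : ((gs₂.flatten ++ f₁) ++ (f₂ ++ gs₁.flatten)).Nodup := by
    rw [← hflat]
    exact ((frontier_perm _ _ hfront).nodup_iff).mpr hnd
  have hbc : BorderCompatible (gs₂.flatten ++ f₁).toFinset (qnode ds) := by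
    refine ⟨?_, _, _, _, hfront, hflat, Or.inl rfl⟩
    rw [List.toFinset_nonempty_iff]
    simp [hne]
  have := le_border (w := w) hbc
  rw [List.sum_toFinset w hlnd.of_append_left, List.map_append, List.sum_append,
    frontiers_sum w hgs₂] at this
  rw [show ((ds.drop (k+1)).reverse.map (total w)).sum = ((ds.drop (k+1)).map (total w)).sum by
    rw [List.map_reverse, List.sum_reverse]] at this
  omega

lemma border_ge_take (w : U → ℤ) {ds : List (PQTree U)}
    (hprop : ∀ d ∈ ds, Proper d) (hnd : (leaves (qnode ds)).Nodup)
    {k : ℕ} (hk : k < ds.length) :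
    border w ds[k] + ((ds.take k).map (total w)).sum ≤ border w (qnode ds) := by
  have hmem : ds[k] ∈ ds := List.getElem_mem hk
  obtain ⟨S, ⟨hSne, f, f₁, f₂, hfr, rfl, hS⟩, hb⟩ := border_attained w (hprop _ hmem)
  have hfnd : (f₁ ++ f₂).Nodup := ((frontier_perm _ _ hfr).nodup_iff).mpr (leaves_child_nodup hnd hmem)
  rcases hS with rfl | rfl
  · have hne : f₁ ≠ [] := by
      rintro rfl; simp at hSne
    have := construct_keep_prefix w hprop hnd hk hfr hne
    rw [hb, List.sum_toFinset w hfnd.of_append_left]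
    exact this
  · have hne : f₂ ≠ [] := by
      rintro rfl; simp at hSne
    have := construct_rev_suffix w hprop hnd hk hfr hne
    rw [hb, List.sum_toFinset w hfnd.of_append_right]
    exact this

lemma border_ge_drop (w : U → ℤ) {ds : List (PQTree U)}
    (hprop : ∀ d ∈ ds, Proper d) (hnd : (leaves (qnode ds)).Nodup)
    {k : ℕ} (hk : k < ds.length) :
    border w ds[k] + ((ds.drop (k+1)).map (total w)).sum ≤ border w (qnode ds) := by
  have hmem : ds[k] ∈ ds := List.getElem_mem hk
  obtain ⟨S, ⟨hSne, f, f₁, f₂, hfr, rfl, hS⟩, hb⟩ := border_attained w (hprop _ hmem)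
  have hfnd : (f₁ ++ f₂).Nodup := ((frontier_perm _ _ hfr).nodup_iff).mpr (leaves_child_nodup hnd hmem)
  rcases hS with rfl | rfl
  · have hne : f₁ ≠ [] := by
      rintro rfl; simp at hSne
    have := construct_rev_prefix w hprop hnd hk hfr hne
    rw [hb, List.sum_toFinset w hfnd.of_append_left]
    exact this
  · have hne : f₂ ≠ [] := by
      rintro rfl; simp at hSne
    have := construct_keep_suffix w hprop hnd hk hfr hne
    rw [hb, List.sum_toFinset w hfnd.of_append_right]
    exact this

lemma sum_take_fin {n : ℕ} (g : Fin n → ℤ) (i : Fin n) :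
    ((List.ofFn g).take i.val).sum = ∑ j ∈ Finset.univ.filter (fun j => j < i), g j := by
  rw [List.sum_take_ofFn]
  apply Finset.sum_congr ?_ (fun _ _ => rfl)
  ext j; simp only [Finset.mem_filter, Finset.mem_univ, true_and, Fin.lt_def]

lemma sum_drop_fin {n : ℕ} (g : Fin n → ℤ) (i : Fin n) :
    ((List.ofFn g).drop (i.val + 1)).sum = ∑ j ∈ Finset.univ.filter (fun j => i < j), g j := by
  have h1 := List.sum_take_add_sum_drop (List.ofFn g) (i.val + 1)
  rw [List.sum_take_ofFn, List.sum_ofFn] at h1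
  have h2 := Finset.sum_filter_add_sum_filter_not Finset.univ
    (fun j : Fin n => (j : ℕ) < i.val + 1) g
  have h3 : Finset.univ.filter (fun j : Fin n => ¬ (j : ℕ) < i.val + 1) =
      Finset.univ.filter (fun j => i < j) := by
    ext j; simp only [Finset.mem_filter, Finset.mem_univ, true_and, not_lt, Fin.lt_def]; omega
  rw [h3] at h2
  omega

lemma frontier_qnode_inv {cs : List (PQTree U)} {l : List U} (h : IsFrontier (qnode cs) l) :
    (∃ fs, List.Forall₂ IsFrontier cs fs ∧ l = fs.flatten) ∨
    (∃ fs, List.Forall₂ IsFrontier cs.reverse fs ∧ l = fs.flatten) := by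
  cases h with
  | qnodeKeep _ fs hf => exact Or.inl ⟨fs, hf, rfl⟩
  | qnodeRev _ fs hf => exact Or.inr ⟨fs, hf, rfl⟩

/-- **Lemma: `border` at a q-node.** For a q-node `v` with children
`c_1, …, c_ℓ` (`ℓ ≥ 2`) in their given order,
`border(v) = max(x, y)` where `x = max_i (border(c_i) + Σ_{j<i} total(c_j))` and
`y = max_i (border(c_i) + Σ_{j>i} total(c_j))`. -/
theorem border_qnode {U : Type} [DecidableEq U] (w : U → ℤ) (ℓ : ℕ) (hℓ : 2 ≤ ℓ)
    (c : Fin ℓ → PQTree U) (hp : Proper (qnode (List.ofFn c)))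
    (hnd : (leaves (qnode (List.ofFn c))).Nodup) :
    border w (qnode (List.ofFn c)) =
      max
        (sSup {z : ℤ | ∃ i : Fin ℓ, z = border w (c i) +
          ∑ j ∈ Finset.univ.filter (fun j : Fin ℓ => j < i), total w (c j)})
        (sSup {z : ℤ | ∃ i : Fin ℓ, z = border w (c i) +
          ∑ j ∈ Finset.univ.filter (fun j : Fin ℓ => i < j), total w (c j)}) := by
  have hprop : ∀ d ∈ List.ofFn c, Proper d := by
    cases hp with | qnode _ _ h => exact h
  have hlen : (List.ofFn c).length = ℓ := List.length_ofFn
  set FX : Fin ℓ → ℤ := fun i => border w (c i) +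
    ∑ j ∈ Finset.univ.filter (fun j : Fin ℓ => j < i), total w (c j) with hFX
  set FY : Fin ℓ → ℤ := fun i => border w (c i) +
    ∑ j ∈ Finset.univ.filter (fun j : Fin ℓ => i < j), total w (c j) with hFY
  have hXr : {z : ℤ | ∃ i : Fin ℓ, z = FX i} = Set.range FX := by
    ext z; exact ⟨fun ⟨i, h⟩ => ⟨i, h.symm⟩, fun ⟨i, h⟩ => ⟨i, h.symm⟩⟩
  have hYr : {z : ℤ | ∃ i : Fin ℓ, z = FY i} = Set.range FY := by
    ext z; exact ⟨fun ⟨i, h⟩ => ⟨i, h.symm⟩, fun ⟨i, h⟩ => ⟨i, h.symm⟩⟩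
  have hXbdd : BddAbove {z : ℤ | ∃ i : Fin ℓ, z = FX i} := hXr ▸ (Set.finite_range FX).bddAbove
  have hYbdd : BddAbove {z : ℤ | ∃ i : Fin ℓ, z = FY i} := hYr ▸ (Set.finite_range FY).bddAbove
  have hi0 : (0 : ℕ) < ℓ := by omega
  have key_take : ∀ (i : Fin ℓ), (((List.ofFn c).take i.val).map (total w)).sum =
      ∑ j ∈ Finset.univ.filter (fun j : Fin ℓ => j < i), total w (c j) := by
    intro i
    rw [List.map_take, List.map_ofFn]
    exact sum_take_fin (total w ∘ c) i
  have key_drop : ∀ (i : Fin ℓ), (((List.ofFn c).drop (i.val + 1)).map (total w)).sum =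
      ∑ j ∈ Finset.univ.filter (fun j : Fin ℓ => i < j), total w (c j) := by
    intro i
    rw [List.map_drop, List.map_ofFn]
    exact sum_drop_fin (total w ∘ c) i
  have hget : ∀ (k : ℕ) (hk : k < (List.ofFn c).length), (List.ofFn c)[k] = c ⟨k, hlen ▸ hk⟩ := by
    intro k hk
    rw [List.getElem_ofFn]
  apply le_antisymm
  · apply csSup_le (borderSet_nonempty w hp)
    rintro z ⟨S, ⟨hSne, l, l₁, l₂, hfr, rfl, hS⟩, rfl⟩
    have hlnd : (l₁ ++ l₂).Nodup := ((frontier_perm _ _ hfr).nodup_iff).mpr hnd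
    rcases frontier_qnode_inv hfr with ⟨fs, hf, hflat⟩ | ⟨fs, hf, hflat⟩
    · rcases hS with rfl | rfl
      · -- keep, prefix → X
        have hne : l₁ ≠ [] := by rintro rfl; simp at hSne
        obtain ⟨k, hk, hle⟩ := prefix_bound w hprop hf hflat hne hlnd.of_append_left
        set i : Fin ℓ := ⟨k, hlen ▸ hk⟩ with hi
        rw [hget k hk] at hle
        rw [show (List.take k (List.ofFn c)) = List.take i.val (List.ofFn c) by rfl,
          key_take i] at hle
        rw [List.sum_toFinset w hlnd.of_append_left]
        refine le_trans (le_trans hle ?_) (le_max_left _ _)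
        exact le_csSup hXbdd ⟨i, rfl⟩
      · -- keep, suffix → Y
        have hne : l₂ ≠ [] := by rintro rfl; simp at hSne
        obtain ⟨k, hk, hle⟩ := suffix_bound w hprop hf hflat hne hlnd.of_append_right
        set i : Fin ℓ := ⟨k, hlen ▸ hk⟩ with hi
        rw [hget k hk] at hle
        rw [show (List.drop (k+1) (List.ofFn c)) = List.drop (i.val+1) (List.ofFn c) by rfl,
          key_drop i] at hle
        rw [List.sum_toFinset w hlnd.of_append_right]
        refine le_trans (le_trans hle ?_) (le_max_right _ _)
        exact le_csSup hYbdd ⟨i, rfl⟩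
    · have hprop' : ∀ d ∈ (List.ofFn c).reverse, Proper d :=
        fun d hd => hprop d (List.mem_reverse.mp hd)
      have hlenr : (List.ofFn c).reverse.length = ℓ := by simp [hlen]
      rcases hS with rfl | rfl
      · -- rev, prefix → Y
        have hne : l₁ ≠ [] := by rintro rfl; simp at hSne
        obtain ⟨k, hk, hle⟩ := prefix_bound w hprop' hf hflat hne hlnd.of_append_left
        have hkl : k < ℓ := hlenr ▸ hk
        set i : Fin ℓ := ⟨ℓ - 1 - k, by omega⟩ with hi
        have e1 : (List.ofFn c).reverse[k] = c i := by
          rw [List.getElem_reverse, hget _ (by omega)]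
          congr 1
          simp [hi, hlen]
        have e2 : (((List.ofFn c).reverse.take k).map (total w)).sum =
            ∑ j ∈ Finset.univ.filter (fun j : Fin ℓ => i < j), total w (c j) := by
          rw [List.take_reverse, List.map_reverse, List.sum_reverse, hlen,
            show ℓ - k = i.val + 1 by simp [hi]; omega]
          exact key_drop i
        rw [e1, e2] at hle
        rw [List.sum_toFinset w hlnd.of_append_left]
        refine le_trans (le_trans hle ?_) (le_max_right _ _)
        exact le_csSup hYbdd ⟨i, rfl⟩
      · -- rev, suffix → X
        have hne : l₂ ≠ [] := by rintro rfl; simp at hSne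
        obtain ⟨k, hk, hle⟩ := suffix_bound w hprop' hf hflat hne hlnd.of_append_right
        have hkl : k < ℓ := hlenr ▸ hk
        set i : Fin ℓ := ⟨ℓ - 1 - k, by omega⟩ with hi
        have e1 : (List.ofFn c).reverse[k] = c i := by
          rw [List.getElem_reverse, hget _ (by omega)]
          congr 1
          simp [hi, hlen]
        have e2 : (((List.ofFn c).reverse.drop (k+1)).map (total w)).sum =
            ∑ j ∈ Finset.univ.filter (fun j : Fin ℓ => j < i), total w (c j) := by
          rw [List.drop_reverse, List.map_reverse, List.sum_reverse, hlen,
            show ℓ - (k + 1) = i.val by simp [hi]; omega]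
          exact key_take i
        rw [e1, e2] at hle
        rw [List.sum_toFinset w hlnd.of_append_right]
        refine le_trans (le_trans hle ?_) (le_max_left _ _)
        exact le_csSup hXbdd ⟨i, rfl⟩
  · apply max_le
    · refine csSup_le ⟨FX ⟨0, hi0⟩, ⟨⟨0, hi0⟩, rfl⟩⟩ ?_
      rintro z ⟨i, rfl⟩
      have hk : i.val < (List.ofFn c).length := by rw [hlen]; exact i.isLt
      have := border_ge_take w hprop hnd hk
      rw [hget _ hk, key_take i] at this
      simpa using this
    · refine csSup_le ⟨FY ⟨0, hi0⟩, ⟨⟨0, hi0⟩, rfl⟩⟩ ?_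
      rintro z ⟨i, rfl⟩
      have hk : i.val < (List.ofFn c).length := by rw [hlen]; exact i.isLt
      have := border_ge_drop w hprop hnd hk
      rw [hget _ hk, key_drop i] at this
      simpa using this

end PQTree
end
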